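/- Let a, b, c, n, m be integers with n < m, n, m ≥ 1, and suppose there is a prime p dividing c but not dividing a + b. Then the equation a*x^n + b*y^n = c*z^m is not partition regular on the positive integers, except possibly for constant solutions: there exists a finite coloring of the positive integers under which every monochromatic solution (x, y, z) satisfies x = y = z. -/

import Mathlib

noncomputable def gval (m n : ℕ) (e : ℤ) (t : ℕ) : ℤ :=
  ⌊Real.log ((((m : ℤ) - n) * t - e).natAbs : ℝ) / Real.log ((m : ℝ) / n)⌋

lemma pow_mul_eq_aux {P : ℤ} (hP : Prime P) {i k : ℕ} {u w : ℤ}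
    (hu : ¬ P ∣ u) (hw : ¬ P ∣ w) (h : P ^ i * u = P ^ k * w) : i = k := by
  rcases le_total i k with hik | hik
  · by_contra hne
    have h2 : P ^ i * u = P ^ i * (P ^ (k - i) * w) := by
      rw [← mul_assoc, ← pow_add, Nat.add_sub_cancel' hik]; exact h
    have h3 : u = P ^ (k - i) * w := mul_left_cancel₀ (pow_ne_zero _ hP.ne_zero) h2
    exact hu (h3 ▸ (dvd_pow_self P (by omega)).mul_right w)
  · by_contra hne
    have h2 : P ^ k * (P ^ (i - k) * u) = P ^ k * w := by
      rw [← mul_assoc, ← pow_add, Nat.add_sub_cancel' hik]; exact h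
    have h3 : P ^ (i - k) * u = w := mul_left_cancel₀ (pow_ne_zero _ hP.ne_zero) h2
    exact hw (h3 ▸ (dvd_pow_self P (by omega)).mul_right u)

lemma val_sum_eq_aux {P : ℤ} (hP : Prime P) {i j k : ℕ} {u v w : ℤ}
    (hij : i < j) (hu : ¬ P ∣ u) (hw : ¬ P ∣ w)
    (h : P ^ i * u + P ^ j * v = P ^ k * w) : i = k := by
  have h2 : P ^ i * (u + P ^ (j - i) * v) = P ^ k * w := by
    rw [mul_add, ← mul_assoc, ← pow_add, Nat.add_sub_cancel' hij.le]; exact h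
  refine pow_mul_eq_aux hP ?_ hw h2
  intro hdvd
  have h3 : P ∣ P ^ (j - i) * v := (dvd_pow_self P (by omega)).mul_right v
  have h4 : P ∣ u := by
    have h5 := dvd_sub hdvd h3
    simpa using h5
  exact hu h4

lemma modM_case_aux {n M A B α β : ℕ} (hn : 1 ≤ n) (hAM : A < M)
    (h : A + n * α = B + n * β) (hmod : α % M = β % M) (hle : α ≤ β) : α = β := by
  by_contra hne
  have hdvd : M ∣ β - α := (Nat.modEq_iff_dvd' hle).mp hmod
  have h2 : n * α + n * (β - α) = n * β := by rw [← Nat.mul_add, Nat.add_sub_cancel' hle]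
  have h3 : β - α ≤ n * (β - α) := Nat.le_mul_of_pos_left _ hn
  have h4 : M ≤ β - α := Nat.le_of_dvd (by omega) hdvd
  linarith

lemma parity_contra_aux {n m : ℕ} (hn : 1 ≤ n) (hnm : n < m) {C D σ γ : ℕ}
    (hkey : C + m * γ = D + n * σ) (hne : σ ≠ γ) :
    ¬ ((gval m n ((D : ℤ) - C) σ % 2 = 0) ↔ (gval m n ((D : ℤ) - C) γ % 2 = 0)) := by
  have hm1 : 1 ≤ m := hn.trans hnm.le
  have hmn0 : ((m : ℤ) - n) ≠ 0 := sub_ne_zero.mpr (by exact_mod_cast hnm.ne')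
  have hkZ : (C : ℤ) + m * γ = D + n * σ := by exact_mod_cast hkey
  have hrel : (m : ℤ) * (((m : ℤ) - n) * γ - ((D : ℤ) - C))
      = n * (((m : ℤ) - n) * σ - ((D : ℤ) - C)) := by
    linear_combination ((m : ℤ) - n) * hkZ
  have hKσ : ((m : ℤ) - n) * σ - ((D : ℤ) - C) ≠ 0 := by
    intro h0
    have h1 : (m : ℤ) * (((m : ℤ) - n) * γ - ((D : ℤ) - C)) = 0 := by
      rw [hrel, h0, mul_zero]
    have h2 : ((m : ℤ) - n) * γ - ((D : ℤ) - C) = 0 :=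
      (mul_eq_zero.mp h1).resolve_left (by exact_mod_cast (by omega : m ≠ 0))
    have h3 : ((m : ℤ) - n) * σ = ((m : ℤ) - n) * γ := by linarith
    exact hne (by exact_mod_cast mul_left_cancel₀ hmn0 h3)
  have hKγ : ((m : ℤ) - n) * γ - ((D : ℤ) - C) ≠ 0 := by
    intro h0
    have h1 : (n : ℤ) * (((m : ℤ) - n) * σ - ((D : ℤ) - C)) = 0 := by
      rw [← hrel, h0, mul_zero]
    have h2 : ((m : ℤ) - n) * σ - ((D : ℤ) - C) = 0 :=
      (mul_eq_zero.mp h1).resolve_left (by exact_mod_cast (by omega : n ≠ 0))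
    exact hKσ h2
  set k : ℕ := (((m : ℤ) - n) * σ - ((D : ℤ) - C)).natAbs with hk
  set k' : ℕ := (((m : ℤ) - n) * γ - ((D : ℤ) - C)).natAbs with hk'
  have hkpos : 0 < k := Int.natAbs_pos.mpr hKσ
  have hk'pos : 0 < k' := Int.natAbs_pos.mpr hKγ
  have hnat : m * k' = n * k := by
    have h5 := congrArg Int.natAbs hrel
    simpa [Int.natAbs_mul, hk, hk'] using h5
  have hmR : (0:ℝ) < m := by exact_mod_cast hm1
  have hnR : (0:ℝ) < n := by exact_mod_cast hn
  have hq : 0 < Real.log ((m:ℝ)/n) :=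
    Real.log_pos ((one_lt_div hnR).mpr (by exact_mod_cast hnm))
  have hkR : ((k:ℝ)) ≠ 0 := Nat.cast_ne_zero.mpr (by omega)
  have hk'R : ((k':ℝ)) ≠ 0 := Nat.cast_ne_zero.mpr (by omega)
  have hcast : (m:ℝ) * k' = n * k := by exact_mod_cast hnat
  have hlogeq : Real.log ((m:ℝ) * k') = Real.log ((n:ℝ) * k) := by rw [hcast]
  rw [Real.log_mul hmR.ne' hk'R, Real.log_mul hnR.ne' hkR] at hlogeq
  have hlogs : Real.log (k' : ℝ) = Real.log (k : ℝ) - Real.log ((m:ℝ)/n) := by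
    rw [Real.log_div hmR.ne' hnR.ne']; linarith
  have hdiv : Real.log (k':ℝ) / Real.log ((m:ℝ)/n)
      = Real.log (k:ℝ) / Real.log ((m:ℝ)/n) - 1 := by
    rw [hlogs, sub_div, div_self hq.ne']
  have hfl : ⌊Real.log (k':ℝ) / Real.log ((m:ℝ)/n)⌋
      = ⌊Real.log (k:ℝ) / Real.log ((m:ℝ)/n)⌋ - 1 := by
    rw [hdiv, show ((1:ℝ)) = ((1:ℤ):ℝ) by norm_num]
    exact Int.floor_sub_intCast _ 1
  have e1 : gval m n ((D:ℤ) - C) σ = ⌊Real.log (k:ℝ) / Real.log ((m:ℝ)/n)⌋ := rfl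
  have e2 : gval m n ((D:ℤ) - C) γ = ⌊Real.log (k':ℝ) / Real.log ((m:ℝ)/n)⌋ := rfl
  intro hiff
  rw [e1, e2, hfl] at hiff
  omega

noncomputable def colorFn (p m n A B C : ℕ) (hp : 0 < p) :
    ℕ → Fin (max A B + 2) × Fin (max A B + 1) × Fin p × Bool × Bool := fun t =>
  (⟨min (t.factorization p) (max A B + 1), Nat.lt_succ_of_le (min_le_right _ _)⟩,
    ⟨t.factorization p % (max A B + 1), Nat.mod_lt _ (Nat.succ_pos _)⟩,
    ⟨(t / p ^ t.factorization p) % p, Nat.mod_lt _ hp⟩,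
    decide (gval m n ((A : ℤ) - C) (t.factorization p) % 2 = 0),
    decide (gval m n ((B : ℤ) - C) (t.factorization p) % 2 = 0))

lemma colorFn_eq {p m n A B C : ℕ} {hp : 0 < p} {s t : ℕ}
    (h : colorFn p m n A B C hp s = colorFn p m n A B C hp t) :
    min (s.factorization p) (max A B + 1) = min (t.factorization p) (max A B + 1) ∧
    s.factorization p % (max A B + 1) = t.factorization p % (max A B + 1) ∧
    (s / p ^ s.factorization p) % p = (t / p ^ t.factorization p) % p ∧
    ((gval m n ((A : ℤ) - C) (s.factorization p) % 2 = 0) ↔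
      (gval m n ((A : ℤ) - C) (t.factorization p) % 2 = 0)) ∧
    ((gval m n ((B : ℤ) - C) (s.factorization p) % 2 = 0) ↔
      (gval m n ((B : ℤ) - C) (t.factorization p) % 2 = 0)) := by
  simpa only [colorFn, Prod.mk.injEq, Fin.mk.injEq, decide_eq_decide] using h

set_option maxHeartbeats 1600000 in
theorem axn_byn_eq_czm_not_PR_of_lt (a b c : ℤ) (ha : a ≠ 0) (hb : b ≠ 0) (hc : c ≠ 0)
    (n m : ℕ) (hn : 1 ≤ n) (hm : 1 ≤ m) (hnm : n < m)
    (p : ℕ) (hp : p.Prime) (hpc : (p : ℤ) ∣ c) (hpab : ¬ (p : ℤ) ∣ (a + b)) :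
    ∃ (r : ℕ) (χ : ℕ → Fin r),
      ∀ x y z : ℕ, 0 < x → 0 < y → 0 < z →
        χ x = χ y → χ y = χ z →
          a * (x : ℤ) ^ n + b * (y : ℤ) ^ n = c * (z : ℤ) ^ m →
            x = y ∧ y = z := by
  classical
  have hpZ : Prime (p : ℤ) := Nat.prime_iff_prime_int.mp hp
  have hdecInt : ∀ t : ℤ, t ≠ 0 → ∃ (k : ℕ) (u : ℤ), t = (p:ℤ) ^ k * u ∧ ¬ (p:ℤ) ∣ u := by
    intro t ht
    have hta : t.natAbs ≠ 0 := Int.natAbs_ne_zero.mpr ht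
    have h1 : p ^ (t.natAbs.factorization p) * (t.natAbs / p ^ (t.natAbs.factorization p))
        = t.natAbs := Nat.ordProj_mul_ordCompl_eq_self t.natAbs p
    have h2 : ¬ p ∣ t.natAbs / p ^ (t.natAbs.factorization p) :=
      Nat.not_dvd_ordCompl hp hta
    have h2' : ¬ (p:ℤ) ∣ ((t.natAbs / p ^ (t.natAbs.factorization p) : ℕ) : ℤ) := by
      intro h; exact h2 (Int.natCast_dvd_natCast.mp h)
    have h4 : (p:ℤ) ^ (t.natAbs.factorization p)
        * ((t.natAbs / p ^ (t.natAbs.factorization p) : ℕ) : ℤ) = (t.natAbs : ℤ) := by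
      exact_mod_cast congrArg (Nat.cast (R := ℤ)) h1
    rcases Int.natAbs_eq t with h3 | h3
    · exact ⟨t.natAbs.factorization p,
        ((t.natAbs / p ^ (t.natAbs.factorization p) : ℕ) : ℤ), h3.trans h4.symm, h2'⟩
    · refine ⟨t.natAbs.factorization p,
        -((t.natAbs / p ^ (t.natAbs.factorization p) : ℕ) : ℤ), ?_, by
          rw [dvd_neg]; exact h2'⟩
      calc t = -(t.natAbs : ℤ) := h3
      _ = -((p:ℤ) ^ (t.natAbs.factorization p)
            * ((t.natAbs / p ^ (t.natAbs.factorization p) : ℕ) : ℤ)) := by rw [h4]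
      _ = (p:ℤ) ^ (t.natAbs.factorization p)
            * (-((t.natAbs / p ^ (t.natAbs.factorization p) : ℕ) : ℤ)) := by ring
  obtain ⟨A, a', haeq, hpa'⟩ := hdecInt a ha
  obtain ⟨B, b', hbeq, hpb'⟩ := hdecInt b hb
  obtain ⟨C, c', hceq, hpc'⟩ := hdecInt c hc
  have hC1 : 1 ≤ C := by
    by_contra h
    have hC0 : C = 0 := by omega
    rw [hC0, pow_zero, one_mul] at hceq
    exact hpc' (hceq ▸ hpc)
  have hAB1 : ¬ (1 ≤ A ∧ 1 ≤ B) := by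
    rintro ⟨h1, h2⟩
    refine hpab (dvd_add ?_ ?_)
    · rw [haeq]; exact (dvd_pow_self (p:ℤ) (by omega)).mul_right a'
    · rw [hbeq]; exact (dvd_pow_self (p:ℤ) (by omega)).mul_right b'
  refine ⟨_, (Fintype.equivFin (Fin (max A B + 2) × Fin (max A B + 1) × Fin p × Bool × Bool)) ∘
    colorFn p m n A B C hp.pos, ?_⟩
  intro x y z hx hy hz hxy hyz heq
  exfalso
  obtain ⟨hm1xy, hm2xy, hm3xy, hg1xy, hg2xy⟩ := colorFn_eq ((Fintype.equivFin _).injective hxy)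
  obtain ⟨hm1yz, hm2yz, hm3yz, hg1yz, hg2yz⟩ := colorFn_eq ((Fintype.equivFin _).injective hyz)
  set T := max A B + 1 with hT
  set α := x.factorization p with hαd
  set β := y.factorization p with hβd
  set γ := z.factorization p with hγd
  set X := x / p ^ α with hXd
  set Y := y / p ^ β with hYd
  set Z := z / p ^ γ with hZd
  have hxe : p ^ α * X = x := Nat.ordProj_mul_ordCompl_eq_self x p
  have hye : p ^ β * Y = y := Nat.ordProj_mul_ordCompl_eq_self y p
  have hze : p ^ γ * Z = z := Nat.ordProj_mul_ordCompl_eq_self z p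
  have hpX : ¬ p ∣ X := Nat.not_dvd_ordCompl hp hx.ne'
  have hpY : ¬ p ∣ Y := Nat.not_dvd_ordCompl hp hy.ne'
  have hpZc : ¬ p ∣ Z := Nat.not_dvd_ordCompl hp hz.ne'
  clear_value T α β γ X Y Z
  have hXZ : ¬ (p:ℤ) ∣ (X:ℤ) := fun h => hpX (Int.natCast_dvd_natCast.mp h)
  have hYZ' : ¬ (p:ℤ) ∣ (Y:ℤ) := fun h => hpY (Int.natCast_dvd_natCast.mp h)
  have hZZ : ¬ (p:ℤ) ∣ (Z:ℤ) := fun h => hpZc (Int.natCast_dvd_natCast.mp h)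
  have hxZ : (x:ℤ) = (p:ℤ) ^ α * (X:ℤ) := by rw [← hxe]; push_cast; ring
  have hyZ : (y:ℤ) = (p:ℤ) ^ β * (Y:ℤ) := by rw [← hye]; push_cast; ring
  have hzZ : (z:ℤ) = (p:ℤ) ^ γ * (Z:ℤ) := by rw [← hze]; push_cast; ring
  have hu1 : ¬ (p:ℤ) ∣ a' * (X:ℤ) ^ n := by
    intro h
    rcases hpZ.dvd_mul.mp h with h | h
    · exact hpa' h
    · exact hXZ (hpZ.dvd_of_dvd_pow h)
  have hu2 : ¬ (p:ℤ) ∣ b' * (Y:ℤ) ^ n := by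
    intro h
    rcases hpZ.dvd_mul.mp h with h | h
    · exact hpb' h
    · exact hYZ' (hpZ.dvd_of_dvd_pow h)
  have hw : ¬ (p:ℤ) ∣ c' * (Z:ℤ) ^ m := by
    intro h
    rcases hpZ.dvd_mul.mp h with h | h
    · exact hpc' h
    · exact hZZ (hpZ.dvd_of_dvd_pow h)
  have E2 : (p:ℤ)^(A + n*α) * (a' * (X:ℤ)^n) + (p:ℤ)^(B + n*β) * (b' * (Y:ℤ)^n)
      = (p:ℤ)^(C + m*γ) * (c' * (Z:ℤ)^m) := by
    rw [haeq, hbeq, hceq, hxZ, hyZ, hzZ] at heq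
    linear_combination heq
  have hmulγ : n * γ ≤ m * γ := Nat.mul_le_mul_right γ hnm.le
  rcases lt_trichotomy (A + n*α) (B + n*β) with hlt | heqc | hgt
  · -- A + nα < B + nβ
    have hkey : A + n*α = C + m*γ := val_sum_eq_aux hpZ hlt hu1 hw E2
    by_cases hσγ : α = γ
    · have hmulγ2 : n * γ + γ ≤ m * γ := by
        calc n * γ + γ = (n+1) * γ := by ring
        _ ≤ m * γ := Nat.mul_le_mul_right γ hnm
      rw [hσγ] at hkey
      have hCA : C + γ ≤ A := by linarith
      have hγT : γ < T := by
        have h0 := le_max_left A B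
        clear * - hCA hC1 hT h0; omega
      have hβγ : β = γ := by
        have h1 : min α T = min β T := hm1xy
        have h2 : min β T = min γ T := hm1yz
        clear * - h1 h2 hγT; omega
      rw [hσγ, hβγ] at hlt
      have hABlt : A < B := by linarith
      have h1A : 1 ≤ A := by clear * - hCA hC1; omega
      have h1B : 1 ≤ B := by clear * - h1A hABlt; omega
      exact hAB1 ⟨h1A, h1B⟩
    · exact parity_contra_aux hn hnm hkey.symm hσγ (hg1xy.trans hg1yz)
  · -- A + nα = B + nβ
    by_cases hαβ : α = β
    · have hABeq : A = B := by rw [hαβ] at heqc; linarith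
      have hA0 : A = 0 := by
        by_contra h
        refine hAB1 ⟨by clear * - h; omega, by clear * - h hABeq; omega⟩
      have hB0 : B = 0 := by clear * - hA0 hABeq; omega
      have hdig : (p:ℤ) ∣ (Y:ℤ) - (X:ℤ) := by
        have h1 : (X:ℤ) % p = (Y:ℤ) % p := by
          have h0 := hm3xy
          exact_mod_cast congrArg (Nat.cast (R := ℤ)) h0
        exact Int.ModEq.dvd h1
      have hUnd : ¬ (p:ℤ) ∣ (a * (X:ℤ)^n + b * (Y:ℤ)^n) := by
        intro h
        have hd2 : (p:ℤ) ∣ (Y:ℤ)^n - (X:ℤ)^n := hdig.trans (sub_dvd_pow_sub_pow _ _ n)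
        have h2 : (p:ℤ) ∣ (a + b) * (X:ℤ)^n := by
          have h3 : (a + b) * (X:ℤ)^n
              = (a * (X:ℤ)^n + b * (Y:ℤ)^n) - b * ((Y:ℤ)^n - (X:ℤ)^n) := by ring
          rw [h3]; exact dvd_sub h (hd2.mul_left b)
        rcases hpZ.dvd_mul.mp h2 with h | h
        · exact hpab h
        · exact hXZ (hpZ.dvd_of_dvd_pow h)
      have ha2 : a = a' := by rw [haeq, hA0, pow_zero, one_mul]
      have hb2 : b = b' := by rw [hbeq, hB0, pow_zero, one_mul]
      have E3 : (p:ℤ)^(n*α) * (a * (X:ℤ)^n + b * (Y:ℤ)^n)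
          = (p:ℤ)^(C + m*γ) * (c' * (Z:ℤ)^m) := by
        rw [ha2, hb2]
        rw [hA0, hB0, ← hαβ] at E2
        linear_combination E2
      have hkey0 : n*α = C + m*γ := pow_mul_eq_aux hpZ hUnd hw E3
      by_cases hσγ : α = γ
      · rw [hσγ] at hkey0; linarith
      · have hkey : C + m*γ = A + n*α := by rw [hA0]; linarith
        exact parity_contra_aux hn hnm hkey hσγ (hg1xy.trans hg1yz)
    · rcases le_total α β with hle | hle
      · refine hαβ (modM_case_aux hn ?_ heqc hm2xy hle)
        have h0 := le_max_left A B; clear * - h0 hT; omega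
      · refine hαβ (Eq.symm (modM_case_aux hn ?_ heqc.symm hm2xy.symm hle))
        have h0 := le_max_right A B; clear * - h0 hT; omega
  · -- A + nα > B + nβ
    have E2' : (p:ℤ)^(B + n*β) * (b' * (Y:ℤ)^n) + (p:ℤ)^(A + n*α) * (a' * (X:ℤ)^n)
        = (p:ℤ)^(C + m*γ) * (c' * (Z:ℤ)^m) := by linear_combination E2
    have hkey : B + n*β = C + m*γ := val_sum_eq_aux hpZ hgt hu2 hw E2'
    by_cases hσγ : β = γ
    · have hmulγ2 : n * γ + γ ≤ m * γ := by
        calc n * γ + γ = (n+1) * γ := by ring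
        _ ≤ m * γ := Nat.mul_le_mul_right γ hnm
      rw [hσγ] at hkey
      have hCB : C + γ ≤ B := by linarith
      have hγT : γ < T := by
        have h0 := le_max_right A B
        clear * - hCB hC1 hT h0; omega
      have hαγ : α = γ := by
        have h1 : min α T = min β T := hm1xy
        have h2 : min β T = min γ T := hm1yz
        clear * - h1 h2 hγT; omega
      rw [hαγ, hσγ] at hgt
      have hBA : B < A := by linarith
      have h1B : 1 ≤ B := by clear * - hCB hC1; omega
      have h1A : 1 ≤ A := by clear * - h1B hBA; omega
      exact hAB1 ⟨h1A, h1B⟩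
    · exact parity_contra_aux hn hnm hkey.symm hσγ hg2yz
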